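/- For every integer d ≥ 1, the family of sets of d-topological recurrence has the Ramsey property: if S ⊆ ℤ is a set of d-topological recurrence and S = S_1 ∪ S_2, then S_1 is a set of d-topological recurrence or S_2 is a set of d-topological recurrence. -/

import Mathlib

open scoped Classical
open MeasureTheory Filter Topology

noncomputable section

/-- Integer iterate of a bijection `T` of a set: `zIter T n = T^n`. -/
def zIter {X : Type*} (T : Equiv.Perm X) (n : ℤ) : X → X := ⇑(T ^ n)

/-- Integer iterate of a homeomorphism. -/
def hIter {X : Type*} [TopologicalSpace X] (T : X ≃ₜ X) (n : ℤ) : X → X :=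
  zIter T.toEquiv n

/-- The integer nearest to `a`, with ties broken towards the smaller integer.
This is the `⌈·⌉` of the paper. -/
def nearInt (a : ℝ) : ℤ := if a - (⌊a⌋ : ℝ) ≤ 1/2 then ⌊a⌋ else ⌈a⌉

/-- The distance from `a` to the nearest integer, i.e. `‖a‖` in the paper. -/
def distInt (a : ℝ) : ℝ := |a - (nearInt a : ℝ)|

/-- Generalized polynomials of degree at most `d` (for `d ≥ 1`):
`GP 1` is the smallest collection of functions `ℤ → ℝ` containing `n ↦ a n`
and closed under taking the nearest integer, scalar multiplication and finite sums;
`GP d` moreover contains every `GP e` for `e < d` and all functions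
`n ↦ a₀ n^{p₀} ⌈f₁(n)⌉ ⋯ ⌈f k (n)⌉` with `f l ∈ GP (p l)` and `p₀ + ∑ p l = d`. -/
inductive GP : ℕ → (ℤ → ℝ) → Prop
  | lin (a : ℝ) : GP 1 (fun n => a * n)
  | mono {d : ℕ} (hd : 1 ≤ d) (a₀ : ℝ) (p₀ : ℕ) {k : ℕ} (p : Fin k → ℕ)
      (f : Fin k → ℤ → ℝ) (hf : ∀ l, GP (p l) (f l)) (hsum : p₀ + ∑ l, p l = d) :
      GP d (fun n => a₀ * (n : ℝ) ^ p₀ * ∏ l, (nearInt (f l n) : ℝ))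
  | incl {d e : ℕ} (hed : e < d) {f : ℤ → ℝ} (hf : GP e f) : GP d f
  | ceil {d : ℕ} {f : ℤ → ℝ} (hf : GP d f) : GP d (fun n => (nearInt (f n) : ℝ))
  | smul {d : ℕ} (c : ℝ) {f : ℤ → ℝ} (hf : GP d f) : GP d (fun n => c * f n)
  | add {d : ℕ} {f g : ℤ → ℝ} (hf : GP d f) (hg : GP d g) : GP d (fun n => f n + g n)

/-- The bracket expression `L(a₁, …, a_ℓ) = a₁⌈L(a₂, …, a_ℓ)⌉`, `L(a) = a`. -/
def Lfun : List ℝ → ℝ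
  | [] => 0
  | [a] => a
  | a :: b :: rest => a * (nearInt (Lfun (b :: rest)) : ℝ)

/-- Special generalized polynomials of degree at most `d`:
the functions `n ↦ L(n^{j₁} a₁, …, n^{j_ℓ} a_ℓ)` with `1 ≤ ℓ`, `j t ≥ 1`, `∑ j t ≤ d`. -/
def SGP (d : ℕ) (g : ℤ → ℝ) : Prop :=
  ∃ ℓ : ℕ, 1 ≤ ℓ ∧ ∃ (a : Fin ℓ → ℝ) (j : Fin ℓ → ℕ),
    (∀ t, 1 ≤ j t) ∧ (∑ t, j t) ≤ d ∧
    g = fun n : ℤ => Lfun (List.ofFn fun t => (n : ℝ) ^ (j t) * a t)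

/-- `FS({n i}) = {n_{i₁} + ⋯ + n_{i_k} : i₁ < ⋯ < i_k}`, the set of finite sums. -/
def FS {d : ℕ} (n : Fin d → ℤ) : Set ℤ :=
  { m | ∃ I : Finset (Fin d), I.Nonempty ∧ m = ∑ i ∈ I, n i }

/-- `SG d P`: sums `p_{i₁} + ⋯ + p_{i_k}` over strictly increasing finite index
sequences whose consecutive gaps are at most `d` (infinite sequence `P`). -/
def SG (d : ℕ) (P : ℕ → ℤ) : Set ℤ :=
  { n | ∃ k : ℕ, ∃ i : Fin (k + 1) → ℕ, StrictMono i ∧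
      (∀ t : Fin k, i t.succ - i t.castSucc ≤ d) ∧ n = ∑ t, P (i t) }

/-- `SGfin d P` : the same for a finite sequence `P` of length `m`. -/
def SGfin (d : ℕ) {m : ℕ} (P : Fin m → ℤ) : Set ℤ :=
  { n | ∃ k : ℕ, ∃ i : Fin (k + 1) → Fin m, StrictMono i ∧
      (∀ t : Fin k, (i t.succ : ℕ) - (i t.castSucc : ℕ) ≤ d) ∧ n = ∑ t, P (i t) }

/-- A set of integers is syndetic if it has bounded gaps. -/
def Syndetic (A : Set ℤ) : Prop :=
  ∃ N : ℕ, ∀ i : ℤ, ∃ j, i ≤ j ∧ j ≤ i + N ∧ j ∈ A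

/-- `F` has positive upper Banach density. -/
def PosUpperBanachDensity (F : Set ℤ) : Prop :=
  ∃ δ : ℝ, 0 < δ ∧ ∀ N : ℕ, ∃ (a : ℤ) (L : ℕ), N ≤ L ∧ 1 ≤ L ∧
    δ * L ≤ ((Finset.Icc a (a + L - 1)).filter (fun x => x ∈ F)).card

/-- A set `A ⊆ ℤ` contains finite IP-sets of arbitrarily long lengths. -/
def ContainsArbLongFIP (A : Set ℤ) : Prop :=
  ∀ k : ℕ, 1 ≤ k → ∃ p : Fin k → ℤ, FS p ⊆ A

/-- A topological dynamical system `(X, T)` is minimal: every orbit is dense. -/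
def MinimalTDS {X : Type*} [TopologicalSpace X] (T : X ≃ₜ X) : Prop :=
  ∀ x : X, Dense (Set.range fun n : ℤ => hIter T n x)

/-- `Nset T x U = N(x, U) = {n ∈ ℤ : Tⁿ x ∈ U}`. -/
def Nset {X : Type*} [TopologicalSpace X] (T : X ≃ₜ X) (x : X) (U : Set X) : Set ℤ :=
  { n : ℤ | hIter T n x ∈ U }

/-- The regionally proximal relation of order `d`. -/
def RPd {X : Type*} [MetricSpace X] (T : X ≃ₜ X) (d : ℕ) (x y : X) : Prop :=
  ∀ δ : ℝ, 0 < δ → ∃ (x' y' : X) (n : Fin d → ℤ),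
    dist x x' < δ ∧ dist y y' < δ ∧
    ∀ ε : Finset (Fin d), ε.Nonempty →
      dist (hIter T (∑ i ∈ ε, n i) x') (hIter T (∑ i ∈ ε, n i) y') < δ

/-- `S` is a set of `d`-topological recurrence. -/
def TopRecSet (d : ℕ) (S : Set ℤ) : Prop :=
  ∀ (X : Type) [MetricSpace X] [CompactSpace X] (T : X ≃ₜ X), MinimalTDS T →
    ∀ U : Set X, IsOpen U → U.Nonempty →
      ∃ n ∈ S, (⋂ j ∈ Finset.range (d + 1), hIter T ((j : ℤ) * n) ⁻¹' U).Nonempty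

/-- `S` is a set of `d`-recurrence (measurable recurrence). -/
def MeasRecSet (d : ℕ) (S : Set ℤ) : Prop :=
  ∀ (Y : Type) [MeasurableSpace Y] [StandardBorelSpace Y]
    (μ : Measure Y) [IsProbabilityMeasure μ] (T : Y ≃ᵐ Y),
    MeasurePreserving (⇑T) μ μ →
    ∀ A : Set Y, MeasurableSet A → 0 < μ A →
      ∃ n ∈ S, 0 < μ (⋂ j ∈ Finset.range (d + 1), zIter T.toEquiv ((j : ℤ) * n) ⁻¹' A)

/-- `P` is a Birkhoff recurrence set of order `d`. -/
def BirkhoffRecSet (d : ℕ) (P : Set ℤ) : Prop :=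
  ∀ (X : Type) [MetricSpace X] [CompactSpace X] (T : X ≃ₜ X), MinimalTDS T →
    ∀ U : Set X, IsOpen U → U.Nonempty →
      ∃ n : Fin d → ℤ, FS n ⊆ P ∧ (U ∩ ⋂ m ∈ FS n, hIter T m ⁻¹' U).Nonempty

/-- `F` is a Poincaré recurrence set of order `d`. -/
def PoincareRecSet (d : ℕ) (F : Set ℤ) : Prop :=
  ∀ (Y : Type) [MeasurableSpace Y] [StandardBorelSpace Y]
    (μ : Measure Y) [IsProbabilityMeasure μ] (T : Y ≃ᵐ Y),
    MeasurePreserving (⇑T) μ μ →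
    ∀ A : Set Y, MeasurableSet A → 0 < μ A →
      ∃ n : Fin d → ℤ, FS n ⊆ F ∧ 0 < μ (A ∩ ⋂ m ∈ FS n, zIter T.toEquiv m ⁻¹' A)

/-- The upper unitriangular matrix `M(a)` with entries `(M(a))_{i, i+k} = a i k`
(1-based indexing). -/
def Mmat (d : ℕ) (a : ℕ → ℕ → ℝ) : Matrix (Fin (d + 1)) (Fin (d + 1)) ℝ :=
  fun r c =>
    if (r : ℕ) = (c : ℕ) then 1
    else if (r : ℕ) < (c : ℕ) then a ((r : ℕ) + 1) ((c : ℕ) - (r : ℕ)) else 0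

/-- `P_ℓ(a; i, k) = ∑ a_i^{s₁} a_{i+s₁}^{s₂} ⋯`, sum over `(s₁,…,s_ℓ) ∈ {1,…,k}^ℓ`
with `s₁ + ⋯ + s_ℓ = k`. -/
def Ppoly (a : ℕ → ℕ → ℝ) (i k ℓ : ℕ) : ℝ :=
  ∑ s ∈ Finset.univ.filter (fun s : Fin ℓ → Fin k => (∑ t, ((s t : ℕ) + 1)) = k),
    ∏ t : Fin ℓ,
      a (i + ∑ u ∈ Finset.univ.filter (fun u : Fin ℓ => u < t), ((s u : ℕ) + 1))
        ((s t : ℕ) + 1)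

/-- The upper unitriangular matrix with superdiagonal `α₁, …, α_d` (1-based). -/
def Amat (d : ℕ) (α : ℕ → ℝ) : Matrix (Fin (d + 1)) (Fin (d + 1)) ℝ :=
  fun r c =>
    if (r : ℕ) = (c : ℕ) then 1
    else if (c : ℕ) = (r : ℕ) + 1 then α ((r : ℕ) + 1) else 0

end

section helperlemmas
variable {A B : Type*}

lemma zIter_zero (f : Equiv.Perm A) (a : A) : zIter f 0 a = a := by simp [zIter]

lemma zIter_one (f : Equiv.Perm A) (a : A) : zIter f 1 a = f a := by simp [zIter]

lemma zIter_neg_one (f : Equiv.Perm A) (a : A) : zIter f (-1) a = f.symm a := by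
  simp [zIter, Equiv.Perm.inv_def]

lemma zIter_add (f : Equiv.Perm A) (m n : ℤ) (a : A) :
    zIter f m (zIter f n a) = zIter f (m + n) a := by
  simp [zIter, ← Equiv.Perm.mul_apply, ← zpow_add]

lemma zIter_add_one (f : Equiv.Perm A) (n : ℤ) (a : A) :
    zIter f (n + 1) a = zIter f n (f a) := by
  rw [← zIter_one f a, zIter_add]

lemma zIter_sub_one (f : Equiv.Perm A) (n : ℤ) (a : A) :
    zIter f (n - 1) a = zIter f n (f.symm a) := by
  rw [← zIter_neg_one f a, zIter_add, ← sub_eq_add_neg]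

lemma hIter_add_one {X : Type*} [TopologicalSpace X] (T : X ≃ₜ X) (n : ℤ) (a : X) :
    hIter T (n + 1) a = hIter T n (T a) := zIter_add_one T.toEquiv n a

lemma hIter_sub_one {X : Type*} [TopologicalSpace X] (T : X ≃ₜ X) (n : ℤ) (a : X) :
    hIter T (n - 1) a = hIter T n (T.symm a) := zIter_sub_one T.toEquiv n a

lemma hIter_zero {X : Type*} [TopologicalSpace X] (T : X ≃ₜ X) (a : X) :
    hIter T 0 a = a := zIter_zero T.toEquiv a

lemma hIter_one {X : Type*} [TopologicalSpace X] (T : X ≃ₜ X) (a : X) :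
    hIter T 1 a = T a := zIter_one T.toEquiv a

lemma hIter_add {X : Type*} [TopologicalSpace X] (T : X ≃ₜ X) (m n : ℤ) (a : X) :
    hIter T m (hIter T n a) = hIter T (m + n) a := zIter_add T.toEquiv m n a

lemma zIter_semiconj (π : A → B) (f : Equiv.Perm A) (g : Equiv.Perm B)
    (h : ∀ a, π (f a) = g (π a)) (n : ℤ) (a : A) : π (zIter f n a) = zIter g n (π a) := by
  have hsymm : ∀ a, π (f.symm a) = g.symm (π a) := by
    intro a
    have h2 := h (f.symm a)
    rw [f.apply_symm_apply] at h2
    rw [h2, g.symm_apply_apply]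
  induction n using Int.induction_on generalizing a with
  | zero => simp [zIter_zero]
  | succ n ih => rw [zIter_add_one, zIter_add_one, ih, h]
  | pred n ih =>
      have e1 : (-(n:ℤ) - 1) = (-(n:ℤ)) - 1 := by ring
      rw [e1, zIter_sub_one, zIter_sub_one, ih, hsymm]

variable {X : Type*} [TopologicalSpace X]

lemma hIter_continuous (T : X ≃ₜ X) (n : ℤ) : Continuous (hIter T n) := by
  induction n using Int.induction_on with
  | zero =>
      have : hIter T 0 = id := funext fun a => hIter_zero _ _
      rw [this]; exact continuous_id
  | succ n ih =>
      have : hIter T ((n : ℤ) + 1) = fun a => hIter T n (T a) :=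
        funext fun a => hIter_add_one _ _ _
      rw [this]; exact ih.comp T.continuous
  | pred n ih =>
      have e1 : (-(n:ℤ) - 1) = (-(n:ℤ)) - 1 := by ring
      have : hIter T (-(n : ℤ) - 1) = fun a => hIter T (-(n:ℤ)) (T.symm a) := by
        funext a; rw [e1, hIter_sub_one]
      rw [this]; exact ih.comp T.symm.continuous

lemma hIter_mem (T : X ≃ₜ X) {Y : Set X} (hY : T '' Y = Y) (n : ℤ) {x : X}
    (hx : x ∈ Y) : hIter T n x ∈ Y := by
  have hfwd : ∀ z ∈ Y, T z ∈ Y := fun z hz => hY ▸ Set.mem_image_of_mem T hz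
  have hbwd : ∀ z ∈ Y, T.symm z ∈ Y := by
    intro z hz
    rw [← hY] at hz
    obtain ⟨w, hw, rfl⟩ := hz
    simpa using hw
  induction n using Int.induction_on generalizing x with
  | zero => simpa [hIter_zero] using hx
  | succ n ih => rw [hIter_add_one]; exact ih (hfwd x hx)
  | pred n ih =>
      have e1 : (-(n:ℤ) - 1) = (-(n:ℤ)) - 1 := by ring
      rw [e1, hIter_sub_one]; exact ih (hbwd x hx)

lemma minimal_closed_inv_eq_univ {X : Type*} [MetricSpace X] (T : X ≃ₜ X)
    (hT : MinimalTDS T) {A : Set X} (hne : A.Nonempty) (hcl : IsClosed A)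
    (hinv : T '' A = A) : A = Set.univ := by
  obtain ⟨x, hx⟩ := hne
  have horb : Set.range (fun n : ℤ => hIter T n x) ⊆ A := by
    rintro _ ⟨n, rfl⟩; exact hIter_mem T hinv n hx
  apply Set.eq_univ_of_univ_subset
  rw [← (hT x).closure_eq]
  exact closure_minimal horb hcl

lemma exists_minimal_set (X : Type*) [MetricSpace X] [CompactSpace X] [Nonempty X]
    (T : X ≃ₜ X) :
    ∃ Y : Set X, Y.Nonempty ∧ IsClosed Y ∧ T '' Y = Y ∧
      ∀ Z, Z ⊆ Y → Z.Nonempty → IsClosed Z → T '' Z = Z → Z = Y := by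
  set S : Set (Set X) := {A | A.Nonempty ∧ IsClosed A ∧ T '' A = A} with hSdef
  have huniv : Set.univ ∈ S :=
    ⟨Set.univ_nonempty, isClosed_univ, by rw [Set.image_univ, T.surjective.range_eq]⟩
  have H : ∀ c ⊆ S, IsChain (· ⊆ ·) c → c.Nonempty → ∃ lb ∈ S, ∀ s ∈ c, lb ⊆ s := by
    intro c hcS hchain hcne
    refine ⟨⋂₀ c, ⟨?_, ?_, ?_⟩, fun s hs => Set.sInter_subset_of_mem hs⟩
    · haveI : Nonempty c := hcne.coe_sort
      exact IsCompact.nonempty_sInter_of_directed_nonempty_isCompact_isClosed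
        (IsChain.directedOn hchain.symm)
        (fun U hU => (hcS hU).1)
        (fun U hU => (hcS hU).2.1.isCompact)
        (fun U hU => (hcS hU).2.1)
    · exact isClosed_sInter fun U hU => (hcS hU).2.1
    · calc T '' ⋂₀ c = ⋂ s : c, T '' (s : Set X) := by
            rw [Set.sInter_eq_iInter, Set.image_iInter T.bijective]
        _ = ⋂ s : c, (s : Set X) := Set.iInter_congr fun s => (hcS s.2).2.2
        _ = ⋂₀ c := (Set.sInter_eq_iInter).symm
  obtain ⟨m, -, hmin⟩ := zorn_superset_nonempty S H Set.univ huniv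
  refine ⟨m, hmin.prop.1, hmin.prop.2.1, hmin.prop.2.2, fun Z hZm hZne hZcl hZinv => ?_⟩
  exact Set.Subset.antisymm hZm (hmin.2 ⟨hZne, hZcl, hZinv⟩ hZm)

end helperlemmas


/-- The family of sets of `d`-topological recurrence has the Ramsey property. -/
theorem statement5 (d : ℕ) (hd : 1 ≤ d) (S S₁ S₂ : Set ℤ)
    (hS : TopRecSet d S) (hU : S = S₁ ∪ S₂) :
    TopRecSet d S₁ ∨ TopRecSet d S₂ := by
  by_contra hcon
  rw [not_or] at hcon
  obtain ⟨h1, h2⟩ := hcon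
  rw [TopRecSet] at h1 h2
  push_neg at h1 h2
  obtain ⟨X₁, i1, i2, T₁, hmin₁, U₁, hU₁o, hU₁ne, hrec₁⟩ := h1
  obtain ⟨X₂, j1, j2, T₂, hmin₂, U₂, hU₂o, hU₂ne, hrec₂⟩ := h2
  -- the product system
  haveI : Nonempty X₁ := ⟨hU₁ne.some⟩
  haveI : Nonempty X₂ := ⟨hU₂ne.some⟩
  set T : (X₁ × X₂) ≃ₜ (X₁ × X₂) := T₁.prodCongr T₂ with hTdef
  -- a minimal subsystem
  obtain ⟨Y, hYne, hYcl, hYinv, hYmin⟩ := exists_minimal_set (X₁ × X₂) T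
  -- semiconjugacies with the factors
  have hfst : ∀ (n : ℤ) (a : X₁ × X₂), (hIter T n a).1 = hIter T₁ n a.1 :=
    fun n a => zIter_semiconj Prod.fst T.toEquiv T₁.toEquiv (fun _ => rfl) n a
  have hsnd : ∀ (n : ℤ) (a : X₁ × X₂), (hIter T n a).2 = hIter T₂ n a.2 :=
    fun n a => zIter_semiconj Prod.snd T.toEquiv T₂.toEquiv (fun _ => rfl) n a
  -- the first projection of Y is all of X₁
  have hproj : Prod.fst '' Y = Set.univ := by
    apply minimal_closed_inv_eq_univ T₁ hmin₁ (hYne.image _)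
    · exact ((hYcl.isCompact).image continuous_fst).isClosed
    · calc ⇑T₁ '' (Prod.fst '' Y) = (fun x : X₁ × X₂ => (T x).1) '' Y := by
              rw [Set.image_image]; rfl
        _ = Prod.fst '' (⇑T '' Y) := by rw [Set.image_image]
        _ = Prod.fst '' Y := by rw [hYinv]
  -- a point of Y lying over U₁
  obtain ⟨u, hu⟩ := hU₁ne
  have : u ∈ Prod.fst '' Y := hproj ▸ Set.mem_univ u
  obtain ⟨y, hyY, hy1⟩ := this
  have hy1' : y.1 ∈ U₁ := by rw [hy1]; exact hu
  -- the second coordinate visits U₂ at some time k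
  obtain ⟨-, ⟨k, rfl⟩, hk⟩ := (hmin₂ y.2).exists_mem_open hU₂o hU₂ne
  set W : Set X₂ := hIter T₂ k ⁻¹' U₂ with hWdef
  have hWo : IsOpen W := hU₂o.preimage (hIter_continuous T₂ k)
  -- the induced minimal system on Y
  haveI : CompactSpace Y := isCompact_iff_compactSpace.mp hYcl.isCompact
  have hfwd : ∀ x ∈ Y, T x ∈ Y := fun x hx => hYinv ▸ Set.mem_image_of_mem T hx
  have hbwd : ∀ x ∈ Y, T.symm x ∈ Y := by
    intro x hx
    rw [← hYinv] at hx
    obtain ⟨w, hw, rfl⟩ := hx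
    simpa using hw
  set T' : Y ≃ₜ Y :=
    { toFun := fun a => ⟨T a, hfwd a a.2⟩
      invFun := fun a => ⟨T.symm a, hbwd a a.2⟩
      left_inv := fun a => Subtype.ext (T.symm_apply_apply a)
      right_inv := fun a => Subtype.ext (T.apply_symm_apply a)
      continuous_toFun := (T.continuous.comp continuous_subtype_val).subtype_mk _
      continuous_invFun := (T.symm.continuous.comp continuous_subtype_val).subtype_mk _ }
    with hT'def
  have hval : ∀ (n : ℤ) (a : Y), ((hIter T' n a : Y) : X₁ × X₂) = hIter T n (a : X₁ × X₂) :=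
    fun n a => zIter_semiconj Subtype.val T'.toEquiv T.toEquiv (fun _ => rfl) n a
  have hminY : MinimalTDS T' := by
    intro a
    set O : Set (X₁ × X₂) := Set.range fun n : ℤ => hIter T n (a : X₁ × X₂) with hOdef
    have hOY : O ⊆ Y := by rintro _ ⟨n, rfl⟩; exact hIter_mem T hYinv n a.2
    have hstep : ∀ (n : ℤ) (x : X₁ × X₂), T (hIter T n x) = hIter T (1 + n) x := by
      intro n x
      rw [← hIter_add T 1 n x, hIter_one]
    have hOim : T '' O = O := by
      ext x
      simp only [hOdef, Set.mem_image, Set.mem_range]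
      constructor
      · rintro ⟨-, ⟨n, rfl⟩, rfl⟩
        exact ⟨1 + n, (hstep n _).symm⟩
      · rintro ⟨n, rfl⟩
        exact ⟨hIter T (n - 1) (a : X₁ × X₂), ⟨n - 1, rfl⟩,
          by rw [hstep, show (1:ℤ) + (n - 1) = n by ring]⟩
    have hclO : closure O = Y := by
      apply hYmin
      · exact closure_minimal hOY hYcl
      · exact ⟨(a : X₁ × X₂), subset_closure ⟨0, hIter_zero T _⟩⟩
      · exact isClosed_closure
      · rw [T.image_closure, hOim]
    rw [dense_iff_closure_eq, Set.eq_univ_iff_forall]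
    intro b
    rw [closure_subtype]
    have him : Subtype.val '' (Set.range fun n : ℤ => hIter T' n a) = O := by
      rw [← Set.range_comp]
      exact congrArg Set.range (funext fun n => hval n a)
    rw [him, hclO]
    exact b.2
  -- the open set V in Y
  set V : Set Y := Subtype.val ⁻¹' (U₁ ×ˢ W) with hVdef
  have hVo : IsOpen V := (hU₁o.prod hWo).preimage continuous_subtype_val
  have hVne : V.Nonempty := ⟨⟨y, hyY⟩, Set.mem_prod.mpr ⟨hy1', hk⟩⟩
  -- apply d-recurrence of S on Y
  obtain ⟨n, hnS, z, hz⟩ := hS Y T' hminY V hVo hVne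
  simp only [Set.mem_iInter, Finset.mem_range] at hz
  have hz' : ∀ j : ℕ, j < d + 1 →
      hIter T₁ ((j : ℤ) * n) (z : X₁ × X₂).1 ∈ U₁ ∧
      hIter T₂ ((j : ℤ) * n) (z : X₁ × X₂).2 ∈ W := by
    intro j hj
    have h := hz j hj
    rw [Set.mem_preimage, hVdef] at h
    have h2 : ((hIter T' ((j : ℤ) * n) z : Y) : X₁ × X₂) ∈ U₁ ×ˢ W := h
    rw [hval] at h2
    obtain ⟨ha, hb⟩ := h2
    exact ⟨(hfst ((j:ℤ)*n) _) ▸ ha, (hsnd ((j:ℤ)*n) _) ▸ hb⟩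
  rcases (hU ▸ hnS : n ∈ S₁ ∪ S₂) with hn1 | hn2
  · have hemp := hrec₁ n hn1
    have hmem : (z : X₁ × X₂).1 ∈ ⋂ j ∈ Finset.range (d + 1), hIter T₁ ((j : ℤ) * n) ⁻¹' U₁ := by
      simp only [Set.mem_iInter, Finset.mem_range]
      intro j hj
      exact (hz' j hj).1
    rw [hemp] at hmem
    exact hmem
  · have hemp := hrec₂ n hn2
    have hmem : hIter T₂ k (z : X₁ × X₂).2 ∈
        ⋂ j ∈ Finset.range (d + 1), hIter T₂ ((j : ℤ) * n) ⁻¹' U₂ := by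
      simp only [Set.mem_iInter, Finset.mem_range]
      intro j hj
      have hw := (hz' j hj).2
      rw [hWdef, Set.mem_preimage] at hw
      rw [Set.mem_preimage, hIter_add]
      rw [show (j : ℤ) * n + k = k + (j : ℤ) * n by ring, ← hIter_add]
      exact hw
    rw [hemp] at hmem
    exact hmem
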